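/- Let v_1, ..., v_n be a basis of a vector space V over a field of characteristic 0 (or characteristic not dividing relevant quantities). Define the n×n matrix A by a_{ii} = v_1 for all i, and a_{ij} = v_i − v_j for i ≠ j. Then every row of A is a basis of V. -/

import Mathlib

theorem stmt_9 {V : Type*} [AddCommGroup V] [Module ℚ V] (n : ℕ) (hn : 0 < n)
    (v : Module.Basis (Fin n) ℚ V)
    (A : Fin n → Fin n → V)
    (hdiag : ∀ i, A i i = v ⟨0, hn⟩)
    (hoff : ∀ i j, i ≠ j → A i j = v i - v j) :
    ∀ i, LinearIndependent ℚ (A i) ∧ Submodule.span ℚ (Set.range (A i)) = ⊤ := by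
  intro i
  classical
  set z : Fin n := ⟨0, hn⟩ with hz
  set f : V →ₗ[ℚ] V := v.constr ℚ (A i) with hf
  set b : Fin n → V := fun j =>
    if i = z then (if j = z then v z else v z - v j)
    else (if j = z then v i else if j = i then v z + v i else v z + v i - v j) with hb
  set g : V →ₗ[ℚ] V := v.constr ℚ b with hg
  have hfv : ∀ j, f (v j) = A i j := fun j => v.constr_basis ℚ (A i) j
  have hgv : ∀ j, g (v j) = b j := fun j => v.constr_basis ℚ b j
  have hfz : f (v z) = if i = z then v z else v i - v z := by
    by_cases hi : i = z
    · rw [if_pos hi, hfv, ← hi, hdiag, hi]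
    · rw [if_neg hi, hfv, hoff i z hi]
  have hfi : f (v i) = v z := by rw [hfv, hdiag]
  have hbj : ∀ j, b j =
      (if i = z then (if j = z then v z else v z - v j)
        else (if j = z then v i else if j = i then v z + v i else v z + v i - v j)) :=
    fun j => rfl
  have hfg : f.comp g = LinearMap.id := by
    apply v.ext
    intro j
    simp only [LinearMap.comp_apply, LinearMap.id_apply, hgv, hbj]
    by_cases hi : i = z
    · by_cases hj : j = z
      · rw [if_pos hi, if_pos hj, hfz, if_pos hi, hj]
      · rw [if_pos hi, if_neg hj, map_sub, hfz, if_pos hi, hfv,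
          hoff i j (by rw [hi]; exact fun h => hj h.symm), hi]
        abel
    · by_cases hj : j = z
      · rw [if_neg hi, if_pos hj, hfi, hj]
      · by_cases hji : j = i
        · rw [if_neg hi, if_neg hj, if_pos hji, map_add, hfz, if_neg hi, hfi, hji]
          abel
        · rw [if_neg hi, if_neg hj, if_neg hji, map_sub, map_add, hfz, if_neg hi,
            hfi, hfv, hoff i j (fun h => hji h.symm)]
          abel
  have hgf : g.comp f = LinearMap.id := by
    apply v.ext
    intro j
    simp only [LinearMap.comp_apply, LinearMap.id_apply, hfv]
    by_cases hji : j = i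
    · rw [hji, hdiag, hgv, hbj]
      by_cases hi : i = z
      · rw [if_pos hi, if_pos rfl, hi]
      · rw [if_neg hi, if_pos rfl]
    · rw [hoff i j (fun h => hji h.symm), map_sub, hgv, hgv, hbj, hbj]
      by_cases hi : i = z
      · have hj : ¬ j = z := fun h => hji (h.trans hi.symm)
        rw [if_pos hi, if_pos hi, if_pos hi, if_neg hj]
        abel
      · by_cases hj : j = z
        · rw [if_neg hi, if_neg hi, if_neg hi, if_pos rfl, if_pos hj, hj]
          abel
        · rw [if_neg hi, if_neg hi, if_neg hi, if_pos rfl, if_neg hj, if_neg hji]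
          abel
  let e : V ≃ₗ[ℚ] V := LinearEquiv.ofLinear f g hfg hgf
  have hAe : A i = ⇑(v.map e) := by
    funext j
    simp only [Module.Basis.map_apply, e, LinearEquiv.ofLinear_apply]
    exact (hfv j).symm
  constructor
  · rw [hAe]; exact (v.map e).linearIndependent
  · rw [hAe]; exact (v.map e).span_eq
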